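/- Let s* ≥ s_* be reals, ρ⁺, ρ⁻ > 0, θ > 0, and let P be the uniform probability measure on [0,θ]. With π(x,y) = min(x,y)²/(2ρ⁺) − (s*−s_*)·max(x−y,0) − (1/2)·(1/ρ⁺ + 1/ρ⁻)·max(x−y,0)² and G(x) = ∫ π(x,y) dP(y), the expected profit G is maximised over x ≥ 0 at x̂ = max(0, 2·(θ − (s*−s_*)·ρ⁺)/(3 + ρ⁺/ρ⁻)), i.e. G(x) ≤ G(x̂) for all x ≥ 0. -/

import Mathlib

open MeasureTheory Set

lemma piece_eval (x θ Δ c ρ : ℝ) (hx : 0 ≤ x) (hxθ : x ≤ θ) :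
    ∫ y in (0:ℝ)..θ, (min x y ^ 2 / (2*ρ) - Δ * max (x - y) 0 - c * max (x - y) 0 ^ 2)
      = (θ/(2*ρ) - Δ/2) * x^2 - (1/(3*ρ) + c/3) * x^3 := by
  have hcont : Continuous fun y : ℝ => min x y ^ 2 / (2*ρ) - Δ * max (x - y) 0 - c * max (x - y) 0 ^ 2 := by
    fun_prop
  rw [← intervalIntegral.integral_add_adjacent_intervals (a := (0:ℝ)) (b := x) (c := θ)
      (hcont.intervalIntegrable 0 x) (hcont.intervalIntegrable x θ)]
  have h1 : ∫ y in (0:ℝ)..x, (min x y ^ 2 / (2*ρ) - Δ * max (x - y) 0 - c * max (x - y) 0 ^ 2)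
      = ∫ y in (0:ℝ)..x, (y^2/(2*ρ) - Δ*(x-y) - c*(x-y)^2) := by
    apply intervalIntegral.integral_congr
    intro y hy
    rw [uIcc_of_le hx] at hy
    have h1 : min x y = y := min_eq_right hy.2
    have h2 : max (x - y) 0 = x - y := max_eq_left (by linarith [hy.2])
    simp only [h1, h2]
  have h2 : ∫ y in x..θ, (min x y ^ 2 / (2*ρ) - Δ * max (x - y) 0 - c * max (x - y) 0 ^ 2)
      = ∫ y in x..θ, (x^2/(2*ρ) : ℝ) := by
    apply intervalIntegral.integral_congr
    intro y hy
    rw [uIcc_of_le hxθ] at hy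
    have h1 : min x y = x := min_eq_left hy.1
    have h2 : max (x - y) 0 = 0 := max_eq_right (by linarith [hy.1])
    simp only [h1, h2]; ring
  have hderiv : ∀ y:ℝ, HasDerivAt (fun y => y^3/(6*ρ) + Δ*(x-y)^2/2 + c*(x-y)^3/3)
      (y^2/(2*ρ) - Δ*(x-y) - c*(x-y)^2) y := by
    intro y
    have hxy : HasDerivAt (fun y:ℝ => x - y) (-1) y := (hasDerivAt_id y).const_sub x
    have := (((hasDerivAt_pow 3 y).div_const (6*ρ)).add
      (((hxy.pow 2).const_mul Δ).div_const 2)).add (((hxy.pow 3).const_mul c).div_const 3)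
    convert this using 1
    all_goals try rfl
    all_goals try (simp; ring)
  have h1v : ∫ y in (0:ℝ)..x, (y^2/(2*ρ) - Δ*(x-y) - c*(x-y)^2)
      = x^3/(6*ρ) - (Δ*x^2/2 + c*x^3/3) := by
    rw [intervalIntegral.integral_eq_sub_of_hasDerivAt (fun y _ => hderiv y)
      (by apply Continuous.intervalIntegrable; fun_prop)]
    ring
  rw [h1, h2, h1v, intervalIntegral.integral_const]
  simp only [smul_eq_mul]
  ring


set_option maxHeartbeats 2000000 in
/-- Uniform prior on `[0,θ]`: the fast trader's expected profit is maximised over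
`x ≥ 0` at `x̂ = max 0 (2·(θ − (s*−s_*)·ρ⁺)/(3 + ρ⁺/ρ⁻))`. -/
theorem stmt_11 (sa sb ρp ρm θ : ℝ) (hs : sb ≤ sa) (hρp : 0 < ρp) (hρm : 0 < ρm)
    (hθ : 0 < θ)
    (P : Measure ℝ)
    (hP : P = (ENNReal.ofReal θ)⁻¹ • volume.restrict (Icc 0 θ))
    (π : ℝ → ℝ → ℝ) (G : ℝ → ℝ)
    (hπ : ∀ x y, π x y = min x y ^ 2 / (2 * ρp) - (sa - sb) * max (x - y) 0
      - (1 / 2) * (1 / ρp + 1 / ρm) * max (x - y) 0 ^ 2)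
    (hG : ∀ x, G x = ∫ y, π x y ∂P) :
    ∀ x, 0 ≤ x → G x ≤ G (max 0 (2 * (θ - (sa - sb) * ρp) / (3 + ρp / ρm))) := by
  set Δ := sa - sb with hΔdef
  have hΔ : 0 ≤ Δ := by linarith
  set c : ℝ := (1/2) * (1/ρp + 1/ρm) with hcdef
  have hc : 0 < c := by positivity
  set A : ℝ := θ/(2*ρp) - Δ/2 with hAdef
  set B : ℝ := 1/(3*ρp) + c/3 with hBdef
  have hB : 0 < B := by positivity
  set t : ℝ := 2 * (θ - Δ * ρp) / (3 + ρp / ρm) with htdef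
  have hden : 0 < 3 + ρp / ρm := by positivity
  have ht : 3 * B * t = 2 * A := by
    rw [htdef, hBdef, hAdef, hcdef]
    field_simp
    ring
  -- the candidate maximiser
  set xh : ℝ := max 0 t with hxhdef
  have hxh0 : 0 ≤ xh := le_max_left 0 t
  have htθ : 3 * B * (θ - t) = c * θ + Δ := by
    have h2 : 3 * B * θ - 2 * A = c * θ + Δ := by rw [hAdef, hBdef]; field_simp; ring
    linarith [ht]
  have htle : t ≤ θ := by nlinarith [htθ, hB, hc, hΔ, hθ]
  have hA2 : 3 * B * θ - 2 * A = c * θ + Δ := by rw [hAdef, hBdef]; field_simp; ring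
  clear_value Δ c A B t
  have hxhθ : xh ≤ θ := by
    rcases le_or_gt t 0 with h | h
    · rw [hxhdef, max_eq_left h]; exact hθ.le
    · rw [hxhdef, max_eq_right h.le]; exact htle
  clear_value xh
  -- continuity of the integrand
  have hcont : ∀ x : ℝ, Continuous (π x) := by
    intro x
    have : π x = fun y => min x y ^ 2 / (2 * ρp) - Δ * max (x - y) 0
        - c * max (x - y) 0 ^ 2 := by
      funext y; rw [hπ]
    rw [this]; fun_prop
  -- integrability
  have hInt : ∀ x : ℝ, Integrable (π x) P := by
    intro x
    rw [hP]
    refine Integrable.smul_measure ?_ (by simp [hθ])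
    exact (hcont x).integrableOn_Icc.integrable
  -- value of G on [0, θ]
  have hGval : ∀ x : ℝ, 0 ≤ x → x ≤ θ → G x = θ⁻¹ * (A * x^2 - B * x^3) := by
    intro x hx hxθ
    rw [hG, hP, MeasureTheory.integral_smul_measure]
    have htoReal : ((ENNReal.ofReal θ)⁻¹).toReal = θ⁻¹ := by
      rw [ENNReal.toReal_inv, ENNReal.toReal_ofReal hθ.le]
    rw [htoReal, smul_eq_mul]
    congr 1
    have : ∀ y, π x y = min x y ^ 2 / (2 * ρp) - Δ * max (x - y) 0
        - c * max (x - y) 0 ^ 2 := by intro y; rw [hπ]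
    simp_rw [this]
    rw [MeasureTheory.integral_Icc_eq_integral_Ioc,
      ← intervalIntegral.integral_of_le hθ.le]
    rw [piece_eval x θ Δ c ρp hx hxθ]
    rw [hAdef, hBdef]
  -- monotone decreasing beyond θ
  have hbig : ∀ x : ℝ, θ ≤ x → G x ≤ G θ := by
    intro x hx
    rw [hG, hG]
    refine integral_mono_ae (hInt x) (hInt θ) ?_
    rw [hP]
    refine Measure.ae_smul_measure ?_ _
    rw [ae_restrict_iff' measurableSet_Icc]
    refine MeasureTheory.ae_of_all _ ?_
    intro y hy
    obtain ⟨hy0, hyθ⟩ := hy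
    have h1 : min x y = y := min_eq_right (le_trans hyθ hx)
    have h2 : min θ y = y := min_eq_right hyθ
    have h3 : max (x - y) 0 = x - y := max_eq_left (by linarith)
    have h4 : max (θ - y) 0 = θ - y := max_eq_left (by linarith)
    rw [hπ, hπ, h1, h2, h3, h4]
    have hc' : 0 < (1/2) * (1/ρp + 1/ρm) := by positivity
    nlinarith [hc', mul_nonneg (sub_nonneg.mpr hx) (by linarith : (0:ℝ) ≤ x + θ - 2*y)]
  -- conclusion
  intro x hx
  have hGxh : G xh = θ⁻¹ * (A * xh^2 - B * xh^3) := hGval xh hxh0 hxhθ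
  have key : ∀ z : ℝ, 0 ≤ z → A * z^2 - B * z^3 ≤ A * xh^2 - B * xh^3 := by
    intro z hz
    rcases le_or_gt t 0 with h | h
    · have hA : 2 * A ≤ 0 := by nlinarith [mul_nonneg hB.le (neg_nonneg.mpr h)]
      have : xh = 0 := hxhdef.trans (max_eq_left h)
      rw [this]
      nlinarith [mul_nonneg (by linarith : (0:ℝ) ≤ -2*A) (sq_nonneg z),
        mul_nonneg hB.le (mul_nonneg hz (mul_nonneg hz hz))]
    · have hxht : xh = t := hxhdef.trans (max_eq_right h.le)
      rw [hxht]
      nlinarith [mul_nonneg (mul_nonneg hB.le (sq_nonneg (z - t))) (by linarith : (0:ℝ) ≤ 2*z + t)]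
  rcases le_or_gt x θ with hxθ | hxθ
  · rw [hGval x hx hxθ, hGxh]
    exact mul_le_mul_of_nonneg_left (key x hx) (by positivity)
  · calc G x ≤ G θ := hbig x hxθ.le
      _ ≤ G xh := by
          rw [hGval θ hθ.le le_rfl, hGxh]
          exact mul_le_mul_of_nonneg_left (key θ hθ.le) (by positivity)
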